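/- For a satisfiable C^{ℵ0}I-net N on O and finite multisets M_a, M_b over O: M_a >_N M_b if and only if there is a finite sequence of worsening flips from M_a to M_b with respect to N. -/
import Mathlib


variable {O : Type*} [Fintype O] [DecidableEq O]

/-- A strict partial order: irreflexive, asymmetric, transitive. -/
def IsPrefRel {α : Type*} (r : α → α → Prop) : Prop :=
  (∀ a, ¬ r a a) ∧ (∀ a b, r a b → ¬ r b a) ∧ (∀ a b c, r a b → r b c → r a c)

/-- Monotonicity on subsets of `O`: a strict superset is strictly preferred. -/
def Monotonic (r : Finset O → Finset O → Prop) : Prop :=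
  ∀ a b : Finset O, b ⊂ a → r a b

/-- A CI-statement `S⁺, S⁻ : S₁ ▷ S₂` on `O`. -/
structure CIStmt (O : Type*) [DecidableEq O] where
  sp : Finset O
  sm : Finset O
  s1 : Finset O
  s2 : Finset O
  h1 : s1.Nonempty
  h2 : s2.Nonempty
  dpm : Disjoint sp sm
  dp1 : Disjoint sp s1
  dp2 : Disjoint sp s2
  dm1 : Disjoint sm s1
  dm2 : Disjoint sm s2
  d12 : Disjoint s1 s2

/-- `r` satisfies a CI-statement. -/
def SatStmt (r : Finset O → Finset O → Prop) (c : CIStmt O) : Prop :=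
  ∀ S' : Finset O, S' ⊆ Finset.univ \ (c.sp ∪ c.sm ∪ c.s1 ∪ c.s2) →
    r (S' ∪ c.sp ∪ c.s1) (S' ∪ c.sp ∪ c.s2)

/-- `r` satisfies a CI-net: monotone and satisfies each statement. -/
def SatNet (r : Finset O → Finset O → Prop) (N : Set (CIStmt O)) : Prop :=
  Monotonic r ∧ ∀ c ∈ N, SatStmt r c

/-- A CI-net is satisfiable. -/
def CISatisfiable (N : Set (CIStmt O)) : Prop :=
  ∃ r : Finset O → Finset O → Prop, IsPrefRel r ∧ SatNet r N

/-- CI-flip with respect to `N`. -/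
def CIFlip (N : Set (CIStmt O)) (a b : Finset O) : Prop :=
  ∃ c ∈ N, ∃ S' ⊆ Finset.univ \ (c.sp ∪ c.sm ∪ c.s1 ∪ c.s2),
    a = S' ∪ c.sp ∪ c.s1 ∧ b = S' ∪ c.sp ∪ c.s2

/-- Worsening flip: a `⊃`-flip or a CI-flip. -/
def WFlip (N : Set (CIStmt O)) (a b : Finset O) : Prop :=
  b ⊂ a ∨ CIFlip N a b

/-- The intersection of all preference relations satisfying `N`. -/
def Induced (N : Set (CIStmt O)) (a b : Finset O) : Prop :=
  ∀ r : Finset O → Finset O → Prop, IsPrefRel r ∧ SatNet r N → r a b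

/-- A comparison relation symbol for multiplicity constraints. -/
inductive CRel
  | ge
  | le
  | eq

/-- A simple multiplicity constraint `o R a`. -/
structure Constraint (O : Type*) where
  obj : O
  rel : CRel
  bound : ℕ

/-- A multiset satisfies a constraint. -/
def Constraint.Holds {O : Type*} [DecidableEq O] (c : Constraint O) (M : Multiset O) : Prop :=
  match c.rel with
  | .ge => c.bound ≤ M.count c.obj
  | .le => M.count c.obj ≤ c.bound
  | .eq => M.count c.obj = c.bound

/-- A `C^{ℵ₀}I`-statement `P⁺ : P₁ ▷ P₂`: a finite conjunction of constraints
as precondition and two update patterns (nonzero multisets with disjoint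
supports). -/
structure CAIStmt (O : Type*) where
  pre : List (Constraint O)
  p1 : Multiset O
  p2 : Multiset O
  h1 : p1 ≠ 0
  h2 : p2 ≠ 0
  hd : ∀ a ∈ p1, a ∉ p2

/-- A multiset satisfies the precondition of a statement. -/
def SatPre {O : Type*} [DecidableEq O] (M : Multiset O) (c : CAIStmt O) : Prop :=
  ∀ con ∈ c.pre, con.Holds M

/-- Monotonicity on finite multisets over `O`. -/
def MonotonicM {O : Type*} (r : Multiset O → Multiset O → Prop) : Prop :=
  ∀ a b : Multiset O, b < a → r a b

/-- `r` satisfies a `C^{ℵ₀}I`-statement. -/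
def SatCAIStmt {O : Type*} [DecidableEq O] (r : Multiset O → Multiset O → Prop)
    (c : CAIStmt O) : Prop :=
  ∀ M' : Multiset O, SatPre M' c → r (M' + c.p1) (M' + c.p2)

/-- `r` satisfies a `C^{ℵ₀}I`-net. -/
def SatCAINet {O : Type*} [DecidableEq O] (r : Multiset O → Multiset O → Prop)
    (N : Set (CAIStmt O)) : Prop :=
  MonotonicM r ∧ ∀ c ∈ N, SatCAIStmt r c

/-- Satisfiability of a `C^{ℵ₀}I`-net. -/
def CAISatisfiable {O : Type*} [DecidableEq O] (N : Set (CAIStmt O)) : Prop :=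
  ∃ r : Multiset O → Multiset O → Prop, IsPrefRel r ∧ SatCAINet r N

/-- CI-flip for a `C^{ℵ₀}I`-net. -/
def CAIFlipCI {O : Type*} [DecidableEq O] (N : Set (CAIStmt O))
    (a b : Multiset O) : Prop :=
  ∃ c ∈ N, ∃ M' : Multiset O, SatPre M' c ∧ a = M' + c.p1 ∧ b = M' + c.p2

/-- Worsening flip for a `C^{ℵ₀}I`-net. -/
def CAIWFlip {O : Type*} [DecidableEq O] (N : Set (CAIStmt O))
    (a b : Multiset O) : Prop :=
  b < a ∨ CAIFlipCI N a b

/-- The intersection of all preference relations satisfying `N`. -/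
def CAIInduced {O : Type*} [DecidableEq O] (N : Set (CAIStmt O))
    (a b : Multiset O) : Prop :=
  ∀ r : Multiset O → Multiset O → Prop, IsPrefRel r ∧ SatCAINet r N → r a b

/-- A worsening flip confined to the multiset `M`. -/
def ConfFlip {O : Type*} [DecidableEq O] (N : Set (CAIStmt O)) (M : Multiset O)
    (a b : Multiset O) : Prop :=
  CAIWFlip N a b ∧ a ≤ M ∧ b ≤ M

/-- for a satisfiable `C^{ℵ₀}I`-net, the induced relation
coincides with reachability by finite sequences of worsening flips. -/
theorem stmt_7 (N : Set (CAIStmt O)) (hfin : N.Finite) (h : CAISatisfiable N)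
    (Ma Mb : Multiset O) :
    CAIInduced N Ma Mb ↔ Relation.TransGen (CAIWFlip N) Ma Mb := by
  have key : ∀ (r : Multiset O → Multiset O → Prop), IsPrefRel r ∧ SatCAINet r N →
      ∀ a b, Relation.TransGen (CAIWFlip N) a b → r a b := by
    rintro r ⟨⟨_, _, htr⟩, ⟨hmon, hsat⟩⟩ a b hab
    induction hab with
    | single hstep =>
      rcases hstep with hlt | ⟨c, hc, M', hpre, ha, hb⟩
      · exact hmon _ _ hlt
      · subst ha; subst hb; exact hsat c hc M' hpre
    | tail _ hstep ih =>
      rename_i b c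
      refine htr _ _ _ ih ?_
      rcases hstep with hlt | ⟨st, hst, M', hpre, ha, hb⟩
      · exact hmon _ _ hlt
      · subst ha; subst hb; exact hsat st hst M' hpre
  constructor
  · intro hind
    obtain ⟨r0, hr0⟩ := h
    apply hind
    refine ⟨⟨?_, ?_, fun a b c => Relation.TransGen.trans⟩, ?_, ?_⟩
    · intro a ha
      exact hr0.1.1 a (key r0 hr0 a a ha)
    · intro a b hab hba
      exact hr0.1.2.1 a b (key r0 hr0 a b hab) (key r0 hr0 b a hba)
    · intro a b hlt
      exact Relation.TransGen.single (Or.inl hlt)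
    · intro c hc M' hpre
      exact Relation.TransGen.single (Or.inr ⟨c, hc, M', hpre, rfl, rfl⟩)
  · intro htg r hr
    exact key r hr Ma Mb htg
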